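/- Let d be a positive integer and let γ = (e f; v h) ∈ SL₂(ℤ) (so eh − fv = 1). Set s = gcd(d, v), d₁ = d/s and v₁ = v/s. Then there exist a matrix α ∈ SL₂(ℤ) and an integer k such that (d 0; 0 1)·γ = α·(s k; 0 d₁), where α can be taken of the form (d₁e b; v₁ a) with a·d₁·e − b·v₁ = 1. -/

import Mathlib

/-- Let `d > 0` and `γ = (e f; v h) ∈ SL₂(ℤ)`, i.e. `eh − fv = 1`. With
`s = gcd(d, v)`, `d₁ = d/s`, `v₁ = v/s`, there exist integers `a, b, k` with
`a·(d₁e) − b·v₁ = 1` (so that `α = (d₁e b; v₁ a) ∈ SL₂(ℤ)`) such that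
`(d 0; 0 1)·γ = α·(s k; 0 d₁)`. -/
theorem matrix_decomposition_sl2 (d e f v h : ℤ) (hd : 0 < d)
    (hdet : e * h - f * v = 1) :
    ∃ a b k : ℤ,
      a * ((d / (Int.gcd d v : ℤ)) * e) - b * (v / (Int.gcd d v : ℤ)) = 1 ∧
      !![d, 0; 0, 1] * !![e, f; v, h] =
        !![(d / (Int.gcd d v : ℤ)) * e, b; v / (Int.gcd d v : ℤ), a] *
          !![(Int.gcd d v : ℤ), k; 0, d / (Int.gcd d v : ℤ)] := by
  set s : ℤ := (Int.gcd d v : ℤ) with hs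
  set d₁ : ℤ := d / s with hd₁
  set v₁ : ℤ := v / s with hv₁
  have hgpos : 0 < Int.gcd d v := Int.gcd_pos_of_ne_zero_left v hd.ne'
  have hsd : s ∣ d := Int.gcd_dvd_left d v
  have hsv : s ∣ v := Int.gcd_dvd_right d v
  have hdd : s * d₁ = d := Int.mul_ediv_cancel' hsd
  have hvv : s * v₁ = v := Int.mul_ediv_cancel' hsv
  have hcop : Int.gcd d₁ v₁ = 1 := Int.gcd_div_gcd_div_gcd hgpos
  -- Bezout
  set x : ℤ := Int.gcdA d₁ v₁ with hx
  set y : ℤ := Int.gcdB d₁ v₁ with hy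
  have hbez : d₁ * x + v₁ * y = 1 := by
    have := Int.gcd_eq_gcd_ab d₁ v₁
    rw [hcop] at this
    push_cast at this
    linarith
  refine ⟨h * x, f * s - e * (h * y), h * y, ?_, ?_⟩
  · linear_combination e * h * hbez - f * hvv + hdet
  · ext i j
    fin_cases i <;> fin_cases j <;>
      simp [Matrix.mul_apply, Fin.sum_univ_succ]
    · linear_combination (-e) * hdd
    · linear_combination (-f) * hdd
    · linear_combination -hvv
    · linear_combination (-h) * hbez
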